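/- (Uniqueness via truncation) Let k be a field, E ∈ k[t,y] irreducible over k(t) with deg_t E = h, deg_y E = d ≥ 1, and let f ∈ k[[t]] be a root of E with E_y(t,f) ≠ 0 in k((t)). If Q ∈ k[t,y] has deg_t Q < h and deg_y Q < d, and the power series Q(t,f)/E_y(t,f) ≡ 0 (mod t^{2dh}), then Q = 0. -/

import Mathlib

noncomputable section

/-- The canonical map `k[t] →+* k⟦t⟧`. -/
def polyToSeries (k : Type*) [Field k] : Polynomial k →+* PowerSeries k :=
  Polynomial.eval₂RingHom (PowerSeries.C : k →+* PowerSeries k) PowerSeries.X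

/-- The canonical map `k[t] →+* k((t))`. -/
def polyToLaurent (k : Type*) [Field k] : Polynomial k →+* LaurentSeries k :=
  (HahnSeries.ofPowerSeries ℤ k).comp (polyToSeries k)

/-- Evaluation of `P ∈ k[t][y]` at `y = f` inside `k((t))`. -/
def evalAt (k : Type*) [Field k] (f : PowerSeries k) (P : Polynomial (Polynomial k)) :
    LaurentSeries k :=
  Polynomial.eval₂ (polyToLaurent k) (HahnSeries.ofPowerSeries ℤ k f) P

section helpers
variable {k : Type*} [Field k]

lemma polyToSeries_apply (p : Polynomial k) : polyToSeries k p = (p : PowerSeries k) := by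
  exact Polynomial.eval₂_C_X_eq_coe (φ := p)

lemma coeff_polyToLaurent (p : Polynomial k) (n : ℕ) :
    (polyToLaurent k p).coeff (n : ℤ) = p.coeff n := by
  show ((HahnSeries.ofPowerSeries ℤ k) (polyToSeries k p)).coeff _ = _
  rw [HahnSeries.ofPowerSeries_apply_coeff, polyToSeries_apply, Polynomial.coeff_coe]

lemma coeff_ofPS_neg (x : PowerSeries k) (n : ℤ) (hn : n < 0) :
    ((HahnSeries.ofPowerSeries ℤ k) x).coeff n = 0 := by
  rw [HahnSeries.ofPowerSeries_apply]
  apply HahnSeries.embDomain_notin_range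
  rintro ⟨m, hm⟩
  simp only [Nat.castOrderEmbedding_apply] at hm
  omega

lemma order_ofPS_nonneg (x : PowerSeries k) (hx : (HahnSeries.ofPowerSeries ℤ k) x ≠ 0) :
    0 ≤ ((HahnSeries.ofPowerSeries ℤ k) x).order := by
  by_contra hlt
  exact hx (HahnSeries.coeff_order_eq_zero.mp (coeff_ofPS_neg x _ (by omega)))

lemma evalAt_eq (f : PowerSeries k) (P : Polynomial (Polynomial k)) :
    evalAt k f P = (HahnSeries.ofPowerSeries ℤ k) (P.eval₂ (polyToSeries k) f) :=
  (Polynomial.hom_eval₂ P (polyToSeries k) (HahnSeries.ofPowerSeries ℤ k) f).symm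

lemma order_evalAt_nonneg (f : PowerSeries k) (P : Polynomial (Polynomial k))
    (hP : evalAt k f P ≠ 0) : 0 ≤ (evalAt k f P).order := by
  rw [evalAt_eq] at hP ⊢
  exact order_ofPS_nonneg _ hP

lemma evalAt_mul (f : PowerSeries k) (P₁ P₂ : Polynomial (Polynomial k)) :
    evalAt k f (P₁ * P₂) = evalAt k f P₁ * evalAt k f P₂ :=
  Polynomial.eval₂_mul _ _

lemma evalAt_add (f : PowerSeries k) (P₁ P₂ : Polynomial (Polynomial k)) :
    evalAt k f (P₁ + P₂) = evalAt k f P₁ + evalAt k f P₂ :=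
  Polynomial.eval₂_add _ _

lemma evalAt_C (f : PowerSeries k) (c : Polynomial k) :
    evalAt k f (Polynomial.C c) = polyToLaurent k c :=
  Polynomial.eval₂_C _ _

lemma polyToLaurent_ne_zero {p : Polynomial k} (hp : p ≠ 0) : polyToLaurent k p ≠ 0 := by
  intro h0
  have := coeff_polyToLaurent p p.natDegree
  rw [h0] at this
  simp only [HahnSeries.coeff_zero] at this
  exact Polynomial.leadingCoeff_ne_zero.mpr hp this.symm

lemma order_polyToLaurent_le {p : Polynomial k} (hp : p ≠ 0) :
    (polyToLaurent k p).order ≤ (p.natDegree : ℤ) :=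
  HahnSeries.order_le_of_coeff_ne_zero (by
    rw [coeff_polyToLaurent]; exact Polynomial.leadingCoeff_ne_zero.mpr hp)

lemma withbot_lt_succ {x : WithBot ℕ} {n : ℕ} (hx : x < ((n + 1 : ℕ) : WithBot ℕ)) :
    x ≤ (n : WithBot ℕ) := by
  cases x with
  | bot => exact bot_le
  | coe m =>
    rw [Nat.cast_withBot] at hx ⊢
    exact WithBot.coe_le_coe.mpr (Nat.lt_succ_iff.mp (WithBot.coe_lt_coe.mp hx))

end helpers

section sylv
open Polynomial
variable {k : Type*} [Field k]

def toPolyFun (k : Type*) [Field k] (p q : ℕ) :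
    ((Fin p × Fin q) → k) →ₗ[k] Polynomial (Polynomial k) where
  toFun v := ∑ x : Fin p × Fin q,
    Polynomial.monomial (x.1 : ℕ) (Polynomial.monomial (x.2 : ℕ) (v x))
  map_add' u v := by
    rw [← Finset.sum_add_distrib]
    refine Finset.sum_congr rfl fun x _ => ?_
    simp [map_add]
  map_smul' c v := by
    rw [RingHom.id_apply, Finset.smul_sum]
    refine Finset.sum_congr rfl fun x _ => ?_
    simp [Polynomial.smul_monomial]

lemma toPolyFun_coeff (p q : ℕ) (v : (Fin p × Fin q) → k) (i j : ℕ) :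
    (((toPolyFun k p q) v).coeff i).coeff j =
      if hp : i < p then (if hq : j < q then v (⟨i, hp⟩, ⟨j, hq⟩) else 0) else 0 := by
  simp only [toPolyFun, LinearMap.coe_mk, AddHom.coe_mk, Polynomial.finset_sum_coeff,
    Polynomial.coeff_monomial]
  have : ∀ x : Fin p × Fin q,
      (if (x.1 : ℕ) = i then Polynomial.monomial (x.2 : ℕ) (v x) else 0).coeff j
        = if (x.1 : ℕ) = i ∧ (x.2 : ℕ) = j then v x else 0 := by
    intro x
    split
    · rw [Polynomial.coeff_monomial]
      split <;> split <;> simp_all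
    · split <;> simp_all
  rw [Finset.sum_congr rfl fun x _ => this x]
  by_cases hp : i < p
  · by_cases hq : j < q
    · rw [dif_pos hp, dif_pos hq, Finset.sum_eq_single ((⟨i, hp⟩, ⟨j, hq⟩) : Fin p × Fin q)]
      · simp
      · rintro ⟨b1, b2⟩ - hb
        rw [if_neg]
        rintro ⟨h1, h2⟩
        exact hb (by simp only [Prod.ext_iff, Fin.ext_iff]; exact ⟨h1, h2⟩)
      · intro habs; exact absurd (Finset.mem_univ _) habs
    · rw [dif_pos hp, dif_neg hq, Finset.sum_eq_zero]
      rintro ⟨b1, b2⟩ -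
      rw [if_neg]; rintro ⟨-, h2⟩; exact hq (h2 ▸ b2.isLt)
  · rw [dif_neg hp, Finset.sum_eq_zero]
    rintro ⟨b1, b2⟩ -
    rw [if_neg]; rintro ⟨h1, -⟩; exact hp (h1 ▸ b1.isLt)

lemma toPolyFun_coeff_eq_zero_left (p q : ℕ) (v : (Fin p × Fin q) → k) {i : ℕ} (hi : p ≤ i) :
    ((toPolyFun k p q) v).coeff i = 0 := by
  ext j
  rw [toPolyFun_coeff, dif_neg (by omega)]
  simp

lemma toPolyFun_natDegree_le (p q : ℕ) (v : (Fin p × Fin q) → k) (n : ℕ) (hn : p ≤ n + 1) :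
    ((toPolyFun k p q) v).natDegree ≤ n := by
  rw [Polynomial.natDegree_le_iff_coeff_eq_zero]
  intro N hN
  exact toPolyFun_coeff_eq_zero_left p q v (by omega)

lemma toPolyFun_coeff_degree_le (p q : ℕ) (v : (Fin p × Fin q) → k) (i : ℕ) (n : ℕ)
    (hn : q ≤ n + 1) :
    (((toPolyFun k p q) v).coeff i).degree ≤ (n : WithBot ℕ) := by
  rw [Polynomial.degree_le_iff_coeff_zero]
  intro m hm
  have hm' : n < m := by exact_mod_cast hm
  rw [toPolyFun_coeff]
  split
  · rw [dif_neg (by omega)]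
  · rfl

lemma toPolyFun_eq_zero_iff (p q : ℕ) (v : (Fin p × Fin q) → k)
    (hv : (toPolyFun k p q) v = 0) : v = 0 := by
  funext x
  have := toPolyFun_coeff p q v x.1 x.2
  rw [hv] at this
  simp only [Polynomial.coeff_zero] at this
  rw [dif_pos x.1.isLt, dif_pos x.2.isLt] at this
  simpa using this.symm

lemma coeff_mul_degree_le (A E : Polynomial (Polynomial k)) (α β : ℕ)
    (hA : ∀ i, (A.coeff i).degree ≤ (α : WithBot ℕ))
    (hE : ∀ i, (E.coeff i).degree ≤ (β : WithBot ℕ)) (i : ℕ) :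
    ((A * E).coeff i).degree ≤ ((α + β : ℕ) : WithBot ℕ) := by
  rw [Polynomial.coeff_mul]
  refine le_trans (Polynomial.degree_sum_le _ _) ?_
  refine Finset.sup_le fun x _ => ?_
  refine le_trans (Polynomial.degree_mul_le _ _) ?_
  push_cast
  exact add_le_add (hA _) (hE _)

end sylv

section comb
open Polynomial
variable {k : Type*} [Field k]

set_option maxHeartbeats 2000000 in
lemma exists_small_combination {d m h a : ℕ} (hd : 1 ≤ d) (hm : 1 ≤ m) (hh : 1 ≤ h)
    (hmd : m < d) (hkey : a + d = (m + d - 1) * h)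
    (E Q : Polynomial (Polynomial k))
    (hirr : Irreducible (E.map (algebraMap (Polynomial k) (RatFunc k))))
    (hEy : E.natDegree = d)
    (hEt : ∀ i, (E.coeff i).degree ≤ (h : WithBot ℕ))
    (hQm : Q.natDegree = m) (hQ0 : Q ≠ 0)
    (hQt : ∀ i, (Q.coeff i).degree < (h : WithBot ℕ)) :
    ∃ (B : Polynomial (Polynomial k)) (c : Polynomial k) (A : Polynomial (Polynomial k)),
      c ≠ 0 ∧ c.natDegree ≤ a + h ∧ A * E + B * Q = Polynomial.C c := by
  classical
  set F : (((Fin m × Fin (a+1)) → k) × ((Fin d × Fin (a+2)) → k)) →ₗ[k]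
      ((Fin (d+m-1) × Fin (a+h+1)) → k) :=
    { toFun := fun v x =>
        (((toPolyFun k m (a+1) v.1) * E + (toPolyFun k d (a+2) v.2) * Q).coeff
          ((x.1 : ℕ) + 1)).coeff (x.2 : ℕ)
      map_add' := by
        intro u v
        funext x
        simp only [Prod.fst_add, Prod.snd_add, map_add, add_mul, Polynomial.coeff_add,
          Pi.add_apply]
        ring
      map_smul' := by
        intro c v
        funext x
        simp only [Prod.smul_fst, Prod.smul_snd, map_smul, smul_mul_assoc,
          Polynomial.coeff_smul, RingHom.id_apply, Pi.smul_apply, smul_eq_mul]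
        rw [← smul_add, Polynomial.coeff_smul, Polynomial.coeff_smul]
        rfl } with hF
  have hdom : Module.finrank k (((Fin m × Fin (a+1)) → k) × ((Fin d × Fin (a+2)) → k))
      = m * (a+1) + d * (a+2) := by
    rw [Module.finrank_prod, Module.finrank_pi, Module.finrank_pi]
    simp [Fintype.card_prod]
  have hcod : Module.finrank k ((Fin (d+m-1) × Fin (a+h+1)) → k) = (d+m-1) * (a+h+1) := by
    rw [Module.finrank_pi]
    simp [Fintype.card_prod]
  have hkey' : a + d = (d + m - 1) * h := by rw [show d + m - 1 = m + d - 1 by omega]; exact hkey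
  have hineq : (d+m-1) * (a+h+1) < m * (a+1) + d * (a+2) := by
    have f1 : (d+m-1)*(a+h+1) = (d+m-1)*a + (a+d) + (d+m-1) := by
      rw [Nat.mul_add, Nat.mul_add, Nat.mul_one, ← hkey']
    have f2 : m*(a+1) + d*(a+2) = (m*a + d*a) + (m + 2*d) := by ring
    have f3 : (d+m-1)*a + a = m*a + d*a := by
      have e1 : (d+m-1) + 1 = d + m := by omega
      calc (d+m-1)*a + a = ((d+m-1)+1)*a := by rw [Nat.succ_mul]
        _ = (d+m)*a := by rw [e1]
        _ = m*a + d*a := by ring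
    have f4 : d + m - 1 + 1 = d + m := by omega
    linarith
  have hnotinj : ¬ Function.Injective F := by
    intro hinj
    have := LinearMap.finrank_le_finrank_of_injective hinj
    rw [hdom, hcod] at this
    omega
  have hker : LinearMap.ker F ≠ ⊥ := fun hk => hnotinj (LinearMap.ker_eq_bot.mp hk)
  obtain ⟨v, hvker, hv0⟩ := (Submodule.ne_bot_iff _).mp hker
  set A := toPolyFun k m (a+1) v.1 with hA
  set B := toPolyFun k d (a+2) v.2 with hB
  set P := A * E + B * Q with hP
  have hFv : ∀ (i j : ℕ), i < d + m - 1 → j < a + h + 1 → (P.coeff (i + 1)).coeff j = 0 := by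
    intro i j hi hj
    have := congrFun (LinearMap.mem_ker.mp hvker) (⟨i, hi⟩, ⟨j, hj⟩)
    simp only [hF, LinearMap.coe_mk, AddHom.coe_mk] at this
    exact this
  have hAdeg : A.natDegree ≤ m - 1 := toPolyFun_natDegree_le _ _ _ (m-1) (by omega)
  have hBdeg : B.natDegree ≤ d - 1 := toPolyFun_natDegree_le _ _ _ (d-1) (by omega)
  have hAt : ∀ i, (A.coeff i).degree ≤ (a : WithBot ℕ) :=
    fun i => toPolyFun_coeff_degree_le _ _ _ i a (by omega)
  have hBt : ∀ i, (B.coeff i).degree ≤ ((a+1 : ℕ) : WithBot ℕ) :=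
    fun i => toPolyFun_coeff_degree_le _ _ _ i (a+1) (by omega)
  have hQt' : ∀ i, (Q.coeff i).degree ≤ ((h-1 : ℕ) : WithBot ℕ) := by
    intro i
    apply withbot_lt_succ
    rw [show h - 1 + 1 = h by omega]
    exact hQt i
  have hPt : ∀ i, (P.coeff i).degree ≤ ((a+h : ℕ) : WithBot ℕ) := by
    intro i
    rw [hP, Polynomial.coeff_add]
    refine le_trans (Polynomial.degree_add_le _ _) (max_le ?_ ?_)
    · exact coeff_mul_degree_le A E a h hAt hEt i
    · have := coeff_mul_degree_le B Q (a+1) (h-1) hBt hQt' i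
      rwa [show a+1+(h-1) = a+h by omega] at this
  have hP1 : ∀ i, 1 ≤ i → P.coeff i = 0 := by
    intro i hi
    by_cases hbig : d + m ≤ i
    · rw [hP, Polynomial.coeff_add,
        Polynomial.coeff_eq_zero_of_natDegree_lt
          (lt_of_le_of_lt Polynomial.natDegree_mul_le (by rw [hEy]; omega)),
        Polynomial.coeff_eq_zero_of_natDegree_lt
          (lt_of_le_of_lt Polynomial.natDegree_mul_le (by rw [hQm]; omega)),
        add_zero]
    · refine Polynomial.ext fun j => ?_
      rw [Polynomial.coeff_zero]
      by_cases hj : j ≤ a + h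
      · have := hFv (i-1) j (by omega) (by omega)
        rwa [show i - 1 + 1 = i by omega] at this
      · refine Polynomial.coeff_eq_zero_of_degree_lt (lt_of_le_of_lt (hPt i) ?_)
        exact_mod_cast (by omega : a + h < j)
  set c := P.coeff 0 with hc
  have hPC : P = Polynomial.C c := by
    refine Polynomial.ext fun i => ?_
    rcases Nat.eq_zero_or_pos i with rfl | hi
    · simp [hc]
    · rw [hP1 i hi, Polynomial.coeff_C, if_neg (by omega)]
  have hcne : c ≠ 0 := by
    intro hc0
    have hP0 : A * E + B * Q = 0 := by rw [← hP, hPC, hc0, map_zero]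
    set φ := algebraMap (Polynomial k) (RatFunc k) with hφ
    have hinj : Function.Injective φ := IsFractionRing.injective _ _
    have hE0 : E ≠ 0 := by
      intro hE_
      rw [hE_, Polynomial.natDegree_zero] at hEy
      omega
    have hBQ : (B.map φ) * (Q.map φ) = (E.map φ) * (-(A.map φ)) := by
      have h1 : B * Q = E * (-A) := by
        have := eq_neg_of_add_eq_zero_right hP0
        rw [this]; ring
      rw [← Polynomial.map_mul, h1, Polynomial.map_mul, Polynomial.map_neg]
    have hprime : Prime (E.map φ) := UniqueFactorizationMonoid.irreducible_iff_prime.mp hirr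
    have hdvd : E.map φ ∣ (B.map φ) * (Q.map φ) := ⟨-(A.map φ), hBQ⟩
    have hvzero : v = 0 → False := fun h0 => hv0 h0
    rcases hprime.2.2 _ _ hdvd with hdB | hdQ
    · by_cases hB0 : B = 0
      · have hAE : A * E = 0 := by
          have := hP0; rw [hB0, zero_mul, add_zero] at this; exact this
        have hA0 : A = 0 := by
          rcases mul_eq_zero.mp hAE with h0 | h0
          · exact h0
          · exact absurd h0 hE0
        refine hvzero (Prod.ext ?_ ?_)
        · exact toPolyFun_eq_zero_iff _ _ _ hA0
        · exact toPolyFun_eq_zero_iff _ _ _ hB0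
      · have hBm0 : B.map φ ≠ 0 := fun h0 => hB0 ((Polynomial.map_eq_zero_iff hinj).mp h0)
        have hle := Polynomial.natDegree_le_of_dvd hdB hBm0
        rw [Polynomial.natDegree_map_eq_of_injective hinj,
          Polynomial.natDegree_map_eq_of_injective hinj, hEy] at hle
        omega
    · have hQm0 : Q.map φ ≠ 0 := fun h0 => hQ0 ((Polynomial.map_eq_zero_iff hinj).mp h0)
      have hle := Polynomial.natDegree_le_of_dvd hdQ hQm0
      rw [Polynomial.natDegree_map_eq_of_injective hinj,
        Polynomial.natDegree_map_eq_of_injective hinj, hEy, hQm] at hle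
      omega
  refine ⟨B, c, A, hcne, ?_, hPC.symm ▸ rfl⟩
  exact Polynomial.natDegree_le_iff_degree_le.mpr (hc ▸ hPt 0)

end comb


set_option maxHeartbeats 1000000 in
/-- **uniqueness via truncation.**  Let `k` be a field,
`E ∈ k[t,y]` irreducible over `k(t)` with `deg_t E = h`, `deg_y E = d ≥ 1`, and
let `f ∈ k⟦t⟧` be a root of `E` with `E_y(t,f) ≠ 0` in `k((t))`.  If
`Q ∈ k[t,y]` has `deg_t Q < h`, `deg_y Q < d`, and the Laurent series
`Q(t,f)/E_y(t,f)` vanishes to order `≥ 2dh` (i.e. all its coefficients of index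
`< 2dh` vanish), then `Q = 0`. -/
theorem uniqueness_via_truncation (k : Type*) [Field k] (h d : ℕ) (hd : 1 ≤ d)
    (E : Polynomial (Polynomial k))
    (hirr : Irreducible (E.map (algebraMap (Polynomial k) (RatFunc k))))
    (hEy : E.natDegree = d)
    (hEt : ∀ i, (E.coeff i).degree ≤ (h : WithBot ℕ))
    (f : PowerSeries k)
    (hroot : Polynomial.eval₂ (polyToSeries k) f E = 0)
    (hsimple : evalAt k f (Polynomial.derivative E) ≠ 0)
    (Q : Polynomial (Polynomial k))
    (hQt : ∀ i, (Q.coeff i).degree < (h : WithBot ℕ))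
    (hQy : Q.degree < (d : WithBot ℕ))
    (hvan : ∀ n : ℤ, n < 2 * d * h →
      (evalAt k f Q / evalAt k f (Polynomial.derivative E)).coeff n = 0) :
    Q = 0 := by
  classical
  rcases Nat.eq_zero_or_pos h with hh0 | hh
  · refine Polynomial.ext fun i => ?_
    have := hQt i
    rw [hh0] at this
    rw [Polynomial.coeff_zero, ← Polynomial.degree_eq_bot]
    simpa [Nat.WithBot.lt_zero_iff] using this
  by_contra hQ0
  set m := Q.natDegree with hm
  have hmd : m < d := by
    have := Polynomial.degree_eq_natDegree hQ0
    rw [this] at hQy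
    rw [Nat.cast_withBot, Nat.cast_withBot] at hQy
    exact_mod_cast hQy
  -- obtain the small combination
  obtain ⟨B, c, A, hcne, hcdeg, hABc⟩ :
      ∃ (B : Polynomial (Polynomial k)) (c : Polynomial k) (A : Polynomial (Polynomial k)),
        c ≠ 0 ∧ c.natDegree < 2 * d * h ∧ A * E + B * Q = Polynomial.C c := by
    rcases Nat.eq_zero_or_pos m with hm0 | hm1
    · have hQC : Q = Polynomial.C (Q.coeff 0) :=
        Polynomial.eq_C_of_natDegree_eq_zero (by rw [← hm]; exact hm0)
      refine ⟨1, Q.coeff 0, 0, ?_, ?_, by rw [zero_mul, one_mul, zero_add, ← hQC]⟩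
      · intro h0
        exact hQ0 (by rw [hQC, h0, map_zero])
      · have hdeg := hQt 0
        have h1 : (Q.coeff 0).natDegree < h := by
          rcases eq_or_ne (Q.coeff 0) 0 with h0 | h0
          · rw [h0, Polynomial.natDegree_zero]; omega
          · rw [Polynomial.degree_eq_natDegree h0, Nat.cast_withBot, Nat.cast_withBot] at hdeg
            exact_mod_cast hdeg
        have h2 : h ≤ 2 * d * h := Nat.le_mul_of_pos_left h (by omega)
        omega
    · set a := (m + d - 1) * h - d with ha
      have hdle : d ≤ (m + d - 1) * h := by
        calc d = d * 1 := (mul_one d).symm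
          _ ≤ (m + d - 1) * h := Nat.mul_le_mul (by omega) hh
      have hkey : a + d = (m + d - 1) * h := Nat.sub_add_cancel hdle
      obtain ⟨B, c, A, hcne, hcdeg, hABc⟩ :=
        exists_small_combination hd hm1 hh hmd hkey E Q hirr hEy hEt rfl hQ0 hQt
      refine ⟨B, c, A, hcne, ?_, hABc⟩
      -- a + h < 2*d*h
      have e1 : (m+d)*h = (m+d-1)*h + h := by
        calc (m+d)*h = ((m+d-1)+1)*h := by rw [show (m+d-1)+1 = m+d by omega]
          _ = (m+d-1)*h + h := Nat.succ_mul _ _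
      have e2 : (m+d)*h ≤ (2*d-1)*h := Nat.mul_le_mul (by omega) le_rfl
      have e3 : (2*d-1)*h < 2*d*h := (Nat.mul_lt_mul_right hh).mpr (by omega)
      omega
  -- evaluate the identity at y = f
  have hE0 : evalAt k f E = 0 := by rw [evalAt_eq, hroot, map_zero]
  have heval : polyToLaurent k c = evalAt k f B * evalAt k f Q := by
    have h1 := congrArg (evalAt k f) hABc
    rw [evalAt_add, evalAt_mul, evalAt_mul, hE0, mul_zero, zero_add, evalAt_C] at h1
    exact h1.symm ▸ rfl
  -- order bookkeeping
  set u := evalAt k f Q / evalAt k f (Polynomial.derivative E) with hu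
  have hQf : evalAt k f Q = u * evalAt k f (Polynomial.derivative E) :=
    (div_mul_cancel₀ _ hsimple).symm
  have hcL : polyToLaurent k c ≠ 0 := polyToLaurent_ne_zero hcne
  have hB0 : evalAt k f B ≠ 0 := by
    intro h0; rw [h0, zero_mul] at heval; exact hcL heval
  have hQf0 : evalAt k f Q ≠ 0 := by
    intro h0; rw [h0, mul_zero] at heval; exact hcL heval
  have hu0 : u ≠ 0 := div_ne_zero hQf0 hsimple
  have hord_u : (2 * d * h : ℤ) ≤ u.order := by
    by_contra hlt
    push_neg at hlt
    exact hu0 (HahnSeries.coeff_order_eq_zero.mp (hvan u.order (by exact_mod_cast hlt)))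
  have hordB : 0 ≤ (evalAt k f B).order := order_evalAt_nonneg f B hB0
  have hordE : 0 ≤ (evalAt k f (Polynomial.derivative E)).order :=
    order_evalAt_nonneg f _ hsimple
  have hbig : (2 * d * h : ℤ) ≤ (polyToLaurent k c).order := by
    rw [heval, hQf, ← mul_assoc, HahnSeries.order_mul (mul_ne_zero hB0 hu0) hsimple,
      HahnSeries.order_mul hB0 hu0]
    linarith
  have hsmall : (polyToLaurent k c).order ≤ (c.natDegree : ℤ) := order_polyToLaurent_le hcne
  have : (c.natDegree : ℤ) < (2 * d * h : ℤ) := by exact_mod_cast hcdeg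
  linarith
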